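/- arXiv:2510.26977 — 3 statements merged into one kernel-verified Lean document; each statement's English description precedes it below -/
import Mathlib

section
/- Assume Z_g·exp(i·φ_g) ≠ s_ref. Then the closed-loop dCVOC dynamics have exactly one equilibrium with nonzero current: the unique pair (î, ω_Δ) ∈ (ℂ \ {0}) × ℝ at which both right-hand sides of the dynamics vanish is î_s = −u_g/(Z_g·exp(i·φ_g) − s_ref) and ω_{Δ,s} = 0. -/
open Complex

/-- Assume `Z_g·exp(i·φ_g) ≠ s_ref`. Then the closed-loop dCVOC dynamics
have exactly one equilibrium with nonzero current: the unique pair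
`(î, ω_Δ) ∈ (ℂ \ {0}) × ℝ` at which both right-hand sides of the dynamics vanish is
`î_s = −u_g/(Z_g·exp(i·φ_g) − s_ref)` and `ω_{Δ,s} = 0`. -/
theorem stmt_1 (ug Zg φg pref qref iref kp kplli φ : ℝ)
    (hug : 0 < ug) (hZ : 0 < Zg) (hiref : 0 < iref) (hkp : 0 < kp) (hkplli : 0 < kplli)
    (sref : ℂ) (hsref : sref = ((pref : ℂ) + Complex.I * qref) / (iref : ℂ) ^ 2)
    (pφref qφref : ℝ)
    (hpq : (pφref : ℂ) + Complex.I * qφref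
      = Complex.exp (Complex.I * (Real.pi / 2 - φ)) * sref)
    (hne : (Zg : ℂ) * Complex.exp (Complex.I * φg) ≠ sref)
    -- right-hand side of the current dynamics dî/dt :
    (F : ℂ → ℝ → ℂ)
    (hF : ∀ i ω, F i ω = (kp : ℂ) *
      (((Zg : ℂ) * Complex.exp (Complex.I * (Real.pi / 2 + φg - φ))
          - ((pφref : ℂ) + Complex.I * ((qφref : ℂ) - (ω : ℂ)))) * i
        + (ug : ℂ) * Complex.exp (Complex.I * (Real.pi / 2 - φ))))
    -- right-hand side of the frequency dynamics dω_Δ/dt :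
    (G : ℂ → ℝ → ℝ)
    (hG : ∀ i ω, G i ω = (kplli / kp) * ‖i‖ *
      ((((ug : ℂ) * Complex.exp (Complex.I * (Real.pi / 2 - φ))) * (starRingEnd ℂ) i).im
          / (‖i‖) ^ 2
        + Zg * Real.sin (Real.pi / 2 + φg - φ) - qφref)) :
    ∀ i : ℂ, ∀ ω : ℝ, i ≠ 0 →
      ((F i ω = 0 ∧ G i ω = 0) ↔
        (i = -(ug : ℂ) / ((Zg : ℂ) * Complex.exp (Complex.I * φg) - sref) ∧ ω = 0)) := by

  intro i ω hi
  set r : ℂ := Complex.exp (Complex.I * (Real.pi / 2 - φ)) with hr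
  set X : ℂ := (Zg : ℂ) * Complex.exp (Complex.I * φg) - sref with hX
  set A : ℂ := r * X with hA
  have hXne : X ≠ 0 := sub_ne_zero.mpr hne
  have hrne : r ≠ 0 := Complex.exp_ne_zero _
  have hAne : A ≠ 0 := mul_ne_zero hrne hXne
  have hexp : Complex.exp (Complex.I * (Real.pi / 2 + φg - φ))
      = r * Complex.exp (Complex.I * φg) := by
    rw [hr, ← Complex.exp_add]; congr 1; ring
  have hFeq : ∀ (j : ℂ) (w : ℝ),
      F j w = (kp : ℂ) * ((A + Complex.I * w) * j + (ug : ℂ) * r) := by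
    intro j w
    rw [hF j w, hexp, hA, hX]
    linear_combination (-(kp : ℂ) * j) * hpq
  have hq : (qφref : ℝ) = (r * sref).im := by
    rw [← hpq]; simp
  have hexp3 : Complex.exp (((Real.pi / 2 + φg - φ : ℝ) : ℂ) * Complex.I)
      = r * Complex.exp (Complex.I * φg) := by
    rw [hr, ← Complex.exp_add]; congr 1; push_cast; ring
  have hImA : A.im = Zg * Real.sin (Real.pi / 2 + φg - φ) - qφref := by
    have h1 : A = (Zg : ℂ) * Complex.exp (((Real.pi / 2 + φg - φ : ℝ) : ℂ) * Complex.I)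
        - r * sref := by
      rw [hA, hX, hexp3]; ring
    have hsin : (Complex.exp (((Real.pi / 2 + φg - φ : ℝ) : ℂ) * Complex.I)).im
        = Real.sin (Real.pi / 2 + φg - φ) := Complex.exp_ofReal_mul_I_im _
    rw [h1, Complex.sub_im, hq, Complex.mul_im, Complex.ofReal_re, Complex.ofReal_im, hsin]
    ring
  have hGeq : ∀ (j : ℂ) (w : ℝ), j ≠ 0 →
      (A + Complex.I * w) * j = -((ug : ℂ) * r) →
      G j w = (kplli / kp) * ‖j‖ * (-w) := by
    intro j w hj hEq
    rw [hG j w]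
    congr 1
    have habs : (‖j‖ : ℝ) ^ 2 = Complex.normSq j := Complex.sq_norm j
    have hns : (0 : ℝ) < Complex.normSq j := Complex.normSq_pos.mpr hj
    have hmul : (ug : ℂ) * r * (starRingEnd ℂ) j
        = -((A + Complex.I * w) * (Complex.normSq j : ℂ)) := by
      have h2 : (ug : ℂ) * r = -((A + Complex.I * w) * j) := by
        rw [hEq]; ring
      rw [h2, ← Complex.mul_conj j]; ring
    have him : (((ug : ℂ) * r) * (starRingEnd ℂ) j).im
        = -((A.im + w) * Complex.normSq j) := by
      rw [hmul]
      simp [Complex.add_im, Complex.mul_im]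
    have key : -((A.im + w) * Complex.normSq j) / Complex.normSq j = -(A.im + w) := by
      field_simp
    rw [him, habs, key, hImA]
    ring
  constructor
  · rintro ⟨hF0, hG0⟩
    rw [hFeq i ω] at hF0
    have hkpc : (kp : ℂ) ≠ 0 := by exact_mod_cast hkp.ne'
    have h2 : (A + Complex.I * ω) * i + (ug : ℂ) * r = 0 :=
      (mul_eq_zero.mp hF0).resolve_left hkpc
    have hEq : (A + Complex.I * ω) * i = -((ug : ℂ) * r) := by
      linear_combination h2
    rw [hGeq i ω hi hEq] at hG0
    have habsne : ‖i‖ ≠ 0 := by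
      simpa using hi
    have hw : ω = 0 := by
      have hkk : kplli / kp ≠ 0 := div_ne_zero hkplli.ne' hkp.ne'
      rcases mul_eq_zero.mp hG0 with h | h
      · rcases mul_eq_zero.mp h with h' | h'
        · exact absurd h' hkk
        · exact absurd h' habsne
      · linarith
    subst hw
    refine ⟨?_, rfl⟩
    have hEq' : A * i = -((ug : ℂ) * r) := by
      rw [← hEq]; push_cast; ring
    have h3 : i * X = -(ug : ℂ) := by
      apply mul_left_cancel₀ hrne
      rw [hA] at hEq'
      linear_combination hEq'
    rw [eq_div_iff hXne]
    exact h3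
  · rintro ⟨hieq, hw⟩
    subst hw
    have hEq : (A + Complex.I * (0 : ℝ)) * i = -((ug : ℂ) * r) := by
      rw [hieq, hA]
      push_cast
      field_simp
      ring
    constructor
    · rw [hFeq i 0, hEq]; ring
    · rw [hGeq i 0 hi hEq]; simp
end

section
/- Assume Z_g·exp(i·φ_g) ≠ s_ref, (p_ref, q_ref) ≠ (0, 0), and additionally i_ref = √(p_ref² + q_ref²). Let î_s := −u_g/(Z_g·exp(i·φ_g) − s_ref) and u⃗_s := u_g + Z_g·exp(i·φ_g)·î_s. Then |î_s| = |u⃗_s|·i_ref and u⃗_s·conj(î_s) = |u⃗_s|²·(p_ref + i·q_ref); in particular, if |u⃗_s| = 1 then the equilibrium active and reactive power equal the references p_ref and q_ref and the equilibrium current magnitude equals i_ref. -/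
open Complex

/-- Assume `Z_g·exp(i·φ_g) ≠ s_ref`, `(p_ref, q_ref) ≠ (0, 0)`, and
additionally `i_ref = √(p_ref² + q_ref²)`. Let `î_s := −u_g/(Z_g·exp(i·φ_g) − s_ref)` and
`u⃗_s := u_g + Z_g·exp(i·φ_g)·î_s`. Then `|î_s| = |u⃗_s|·i_ref` and
`u⃗_s·conj(î_s) = |u⃗_s|²·(p_ref + i·q_ref)`; in particular, if `|u⃗_s| = 1` then the
equilibrium active and reactive power equal the references `p_ref` and `q_ref` and the
equilibrium current magnitude equals `i_ref`. -/
theorem stmt_3 (ug Zg φg pref qref iref : ℝ)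
    (hug : 0 < ug) (hZ : 0 < Zg) (hiref : 0 < iref)
    (sref : ℂ) (hsref : sref = ((pref : ℂ) + Complex.I * qref) / (iref : ℂ) ^ 2)
    (hne : (Zg : ℂ) * Complex.exp (Complex.I * φg) ≠ sref)
    (hpq : (pref, qref) ≠ (0, 0))
    (hi : iref = Real.sqrt (pref ^ 2 + qref ^ 2))
    (is : ℂ) (his : is = -(ug : ℂ) / ((Zg : ℂ) * Complex.exp (Complex.I * φg) - sref))
    (us : ℂ) (hus : us = (ug : ℂ) + (Zg : ℂ) * Complex.exp (Complex.I * φg) * is) :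
    ‖is‖ = ‖us‖ * iref ∧
    us * (starRingEnd ℂ) is
      = (‖us‖ : ℂ) ^ 2 * ((pref : ℂ) + Complex.I * qref) ∧
    (‖us‖ = 1 →
      us * (starRingEnd ℂ) is = (pref : ℂ) + Complex.I * qref ∧
      ‖is‖ = iref) := by
  have hD : (Zg : ℂ) * Complex.exp (Complex.I * φg) - sref ≠ 0 := sub_ne_zero.mpr hne
  have hir : (iref : ℂ) ≠ 0 := by exact_mod_cast hiref.ne'
  have hus2 : us = sref * is := by
    rw [hus, his]; field_simp; ring
  have habs1 : ‖((pref : ℂ) + Complex.I * qref)‖ = iref := by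
    rw [mul_comm, Complex.norm_add_mul_I, ← hi]
  have habsS : ‖sref‖ = 1 / iref := by
    rw [hsref, norm_div, habs1, norm_pow, Complex.norm_real, Real.norm_eq_abs, abs_of_pos hiref]
    field_simp
  have h1 : ‖is‖ = ‖us‖ * iref := by
    rw [hus2, norm_mul, habsS]
    field_simp
  have key : us * (starRingEnd ℂ) is
      = (‖us‖ : ℂ) ^ 2 * ((pref : ℂ) + Complex.I * qref) := by
    calc us * (starRingEnd ℂ) is = sref * (is * (starRingEnd ℂ) is) := by rw [hus2]; ring
      _ = sref * ((‖is‖ : ℂ)) ^ 2 := by rw [Complex.mul_conj']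
      _ = sref * ((‖us‖ : ℂ) * iref) ^ 2 := by rw [h1]; push_cast; ring
      _ = _ := by rw [hsref]; field_simp
  refine ⟨h1, key, ?_⟩
  intro hu1
  refine ⟨?_, by rw [h1, hu1, one_mul]⟩
  rw [key, hu1]
  norm_num
end

section
/- Let a := Z_g·cos(π/2 + φ_g − φ) − p_φ^ref and b := Z_g·sin(π/2 + φ_g − φ) − q_φ^ref, fix x ∈ ℝ with a + i·(b + x) ≠ 0, and set w(x) := −u_g·exp(i(π/2 − φ))/(a + i·(b + x)). Then |w(x)|·( Im(u_g·exp(i(π/2 − φ))·conj(w(x)))/|w(x)|² + Z_g·sin(π/2 + φ_g − φ) − q_φ^ref ) = −u_g·x/√(a² + (b + x)²). -/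
open Complex

/-- Let `a := Z_g·cos(π/2 + φ_g − φ) − p_φ^ref` and
`b := Z_g·sin(π/2 + φ_g − φ) − q_φ^ref`, fix `x ∈ ℝ` with `a + i·(b + x) ≠ 0`, and set
`w(x) := −u_g·exp(i(π/2 − φ))/(a + i·(b + x))`. Then
`|w(x)|·( Im(u_g·exp(i(π/2 − φ))·conj(w(x)))/|w(x)|² + Z_g·sin(π/2 + φ_g − φ) − q_φ^ref )
 = −u_g·x/√(a² + (b + x)²)`. -/
theorem stmt_7 (ug Zg φg pref qref iref φ : ℝ)
    (hug : 0 < ug) (hZ : 0 < Zg) (hiref : 0 < iref)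
    (sref : ℂ) (hsref : sref = ((pref : ℂ) + Complex.I * qref) / (iref : ℂ) ^ 2)
    (pφref qφref : ℝ)
    (hpq : (pφref : ℂ) + Complex.I * qφref
      = Complex.exp (Complex.I * (Real.pi / 2 - φ)) * sref)
    (a b : ℝ)
    (ha : a = Zg * Real.cos (Real.pi / 2 + φg - φ) - pφref)
    (hb : b = Zg * Real.sin (Real.pi / 2 + φg - φ) - qφref)
    (x : ℝ) (hx : (a : ℂ) + Complex.I * ((b : ℂ) + x) ≠ 0)
    (w : ℂ)
    (hw : w = -((ug : ℂ) * Complex.exp (Complex.I * (Real.pi / 2 - φ)))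
            / ((a : ℂ) + Complex.I * ((b : ℂ) + x))) :
    ‖w‖ *
      ((((ug : ℂ) * Complex.exp (Complex.I * (Real.pi / 2 - φ))) * (starRingEnd ℂ) w).im
          / (‖w‖) ^ 2
        + Zg * Real.sin (Real.pi / 2 + φg - φ) - qφref)
      = -(ug * x) / Real.sqrt (a ^ 2 + (b + x) ^ 2) := by
  set E := Complex.exp (Complex.I * (Real.pi / 2 - φ)) with hEdef
  set d : ℂ := (a:ℂ) + Complex.I * ((b:ℂ) + x) with hd
  have hE : ‖E‖ = 1 := by
    rw [hEdef, Complex.norm_exp]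
    norm_num [Complex.mul_re]
  have hEE : E * (starRingEnd ℂ) E = 1 := by
    rw [Complex.mul_conj, Complex.normSq_eq_norm_sq, hE]; norm_num
  have hns : Complex.normSq d = a^2 + (b+x)^2 := by
    simp [hd, Complex.normSq_apply, Complex.mul_re, Complex.mul_im]
    ring
  have hnspos : 0 < a^2 + (b+x)^2 := by
    have := Complex.normSq_pos.mpr hx
    rwa [hns] at this
  have hdabs : ‖d‖ = Real.sqrt (a^2+(b+x)^2) := by
    rw [Complex.norm_def, hns]
  have habsw : ‖w‖ = ug / ‖d‖ := by
    rw [hw]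
    simp [map_div₀, hE, abs_of_pos hug]
  have hcw : (starRingEnd ℂ) w = -((ug:ℂ) * (starRingEnd ℂ) E) / (starRingEnd ℂ) d := by
    rw [hw, map_div₀, map_neg, map_mul, Complex.conj_ofReal]
  have hcd : (starRingEnd ℂ) d ≠ 0 := by simpa using hx
  have hdc : d * (starRingEnd ℂ) d = ((a^2+(b+x)^2 : ℝ) : ℂ) := by
    rw [Complex.mul_conj, hns]
  have hNne : ((a^2+(b+x)^2 : ℝ) : ℂ) ≠ 0 := Complex.ofReal_ne_zero.mpr hnspos.ne'
  have hprod : (ug : ℂ) * E * (starRingEnd ℂ) w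
      = -(ug^2 : ℂ) * d / ((a^2+(b+x)^2 : ℝ) : ℂ) := by
    rw [hcw, ← mul_div_assoc, div_eq_div_iff hcd hNne, ← hdc]
    linear_combination (-(ug:ℂ)^2 * d * (starRingEnd ℂ) d) * hEE
  have him : ((ug : ℂ) * E * (starRingEnd ℂ) w).im
      = -(ug^2 * (b+x)) / (a^2+(b+x)^2) := by
    rw [hprod, Complex.div_ofReal_im]
    simp [hd, Complex.mul_im, Complex.mul_re, pow_two]
  rw [him, habsw, hdabs]
  have hs : (0:ℝ) < Real.sqrt (a^2+(b+x)^2) := Real.sqrt_pos.mpr hnspos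
  have hsq : Real.sqrt (a^2+(b+x)^2) ^ 2 = a^2+(b+x)^2 := Real.sq_sqrt hnspos.le
  have hb' : Zg * Real.sin (Real.pi/2+φg-φ) = b + qφref := by rw [hb]; ring
  have key : -(ug^2*(b+x))/(a^2+(b+x)^2) / (ug/Real.sqrt (a^2+(b+x)^2))^2 = -(b+x) := by
    rw [div_pow, hsq]
    field_simp
  rw [key, hb']
  field_simp
  ring
end
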